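/- If C ∈ Matrix (Fin n) (Fin n) ℂ has a sectoral decomposition C = Tᴴ * D * T with T invertible and D diagonal with all diagonal entries of modulus 1, then C is invertible and C⁻¹ * Cᴴ = T⁻¹ * D⁻¹ * D⁻¹ * T; in particular C⁻¹Cᴴ is similar to the diagonal unitary matrix D⁻², so every eigenvalue of C⁻¹Cᴴ has modulus 1. -/

import Mathlib

open Matrix

/-- If `C = Tᴴ D T` is a sectoral decomposition, then `C` is invertible,
`C⁻¹ * Cᴴ = T⁻¹ * D⁻¹ * D⁻¹ * T`, and every eigenvalue of `C⁻¹Cᴴ` has modulus 1. -/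
theorem sectoral_decomposition_inv_mul_conjTranspose {n : ℕ}
    (C T D : Matrix (Fin n) (Fin n) ℂ)
    (hT : IsUnit T) (hD : D.IsDiag) (hDu : ∀ k, ‖D k k‖ = 1)
    (hC : C = T.conjTranspose * D * T) :
    IsUnit C ∧ C⁻¹ * C.conjTranspose = T⁻¹ * D⁻¹ * D⁻¹ * T ∧
      ∀ μ ∈ spectrum ℂ (C⁻¹ * C.conjTranspose), ‖μ‖ = 1 := by
  have hDdiag : Matrix.diagonal D.diag = D := hD.diagonal_diag
  have h1 : ∀ k, D k k * star (D k k) = 1 := by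
    intro k
    have h : Complex.normSq (D k k) = 1 := by
      rw [Complex.normSq_eq_norm_sq, hDu k]; norm_num
    rw [show star (D k k) = (starRingEnd ℂ) (D k k) from rfl, Complex.mul_conj, h]
    norm_num
  have hdk : ∀ k, D k k ≠ 0 := by
    intro k hk
    have := hDu k; rw [hk] at this; simp at this
  have hDunit : IsUnit D := by
    rw [Matrix.isUnit_iff_isUnit_det, ← hDdiag, Matrix.det_diagonal]
    exact isUnit_iff_ne_zero.mpr (Finset.prod_ne_zero_iff.mpr fun k _ => hdk k)
  have hTH : IsUnit T.conjTranspose := by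
    rw [Matrix.isUnit_iff_isUnit_det, Matrix.det_conjTranspose]
    exact (Matrix.isUnit_iff_isUnit_det T).mp hT |>.map (starRingEnd ℂ)
  have hCunit : IsUnit C := by
    rw [hC]; exact (hTH.mul hDunit).mul hT
  -- D⁻¹ = Dᴴ
  have hDH : D⁻¹ = D.conjTranspose := by
    apply Matrix.inv_eq_right_inv
    rw [← hDdiag, Matrix.diagonal_conjTranspose, Matrix.diagonal_mul_diagonal,
      ← Matrix.diagonal_one]
    exact congrArg Matrix.diagonal (funext fun k => h1 k)
  have hTdet := (Matrix.isUnit_iff_isUnit_det T).mp hT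
  have hTHdet := (Matrix.isUnit_iff_isUnit_det _).mp hTH
  have key : C⁻¹ * C.conjTranspose = T⁻¹ * D⁻¹ * D⁻¹ * T := by
    rw [hC, Matrix.conjTranspose_mul, Matrix.conjTranspose_mul,
      Matrix.conjTranspose_conjTranspose, Matrix.mul_inv_rev, Matrix.mul_inv_rev, ← hDH]
    simp only [Matrix.mul_assoc]
    rw [Matrix.nonsing_inv_mul_cancel_left _ _ hTHdet]
  refine ⟨hCunit, key, ?_⟩
  intro μ hμ
  rw [key] at hμ
  obtain ⟨u, hu⟩ := hT
  have hu' : ((u⁻¹ : (Matrix (Fin n) (Fin n) ℂ)ˣ) : Matrix (Fin n) (Fin n) ℂ) = T⁻¹ := by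
    have := Matrix.inv_eq_left_inv (show ((u⁻¹ : (Matrix (Fin n) (Fin n) ℂ)ˣ) : _) * T = 1 by
      rw [← hu]; exact_mod_cast u.inv_mul)
    exact this.symm
  have hsp : spectrum ℂ (T⁻¹ * D⁻¹ * D⁻¹ * T) = spectrum ℂ (D⁻¹ * D⁻¹) := by
    have heq : T⁻¹ * D⁻¹ * D⁻¹ * T =
        ((u⁻¹ : (Matrix (Fin n) (Fin n) ℂ)ˣ) : _) * (D⁻¹ * D⁻¹) * (u : Matrix (Fin n) (Fin n) ℂ) := by
      rw [hu', hu]; simp only [Matrix.mul_assoc]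
    rw [heq, spectrum.units_conjugate']
  rw [hsp] at hμ
  have hDHdiag : D.conjTranspose = Matrix.diagonal (fun k => star (D.diag k)) := by
    conv_lhs => rw [← hDdiag]
    rw [Matrix.diagonal_conjTranspose]
    rfl
  have hDD : D⁻¹ * D⁻¹ = Matrix.diagonal (fun k => star (D.diag k) * star (D.diag k)) := by
    rw [hDH, hDHdiag, Matrix.diagonal_mul_diagonal]
  rw [hDD, spectrum_diagonal] at hμ
  obtain ⟨k, hk⟩ := hμ
  rw [← hk]
  have habs : ‖star (D.diag k)‖ = 1 := by
    rw [show star (D.diag k) = (starRingEnd ℂ) (D.diag k) from rfl, Complex.norm_conj]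
    exact hDu k
  rw [norm_mul, habs, mul_one]
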